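/- Let α ∈ (0,1/2) and J ≥ 1. Let F₁,…,F_J be nonempty convex classes of functions ℝ^k → ℝ with F_j ⊆ F_J for every j, let L be a linear functional defined on a vector space of functions containing F_J, and fix design points x₁,…,x_n ∈ ℝ^k and σ : ℝ^k → (0,∞). Suppose {P_f : f ∈ F_J} is a family of probability measures and, for each j = 1,…,J, ĉ^{ℓ,j} is an integrable random variable satisfying sup_{f∈F_j} E_{P_f}[Lf − ĉ^{ℓ,j}] ≤ ω(z_{1−α/J}, F_J, F_j). Then for every j = 1,…,J, the combined lower endpoint ĉ := max_{1≤ℓ≤J} ĉ^{ℓ,ℓ} satisfies sup_{f∈F_j} E_{P_f}[Lf − ĉ] ≤ (z_{1−α/J}/z_{1−α}) · ω(z_{1−α}, F_J, F_j). -/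

import Mathlib

open MeasureTheory Filter Finset

/-- The `q`-quantile of the standard normal distribution. -/
noncomputable def gaussQuantile (q : ℝ) : ℝ :=
  sInf {t : ℝ | q ≤ ((ProbabilityTheory.gaussianReal 0 1) (Set.Iic t)).toReal}

/-- Ordered modulus of continuity for a linear functional `L` with noise scale `σ`. -/
noncomputable def ordModL {k : ℕ} (n : ℕ) (x : Fin n → (Fin k → ℝ))
    (σ : (Fin k → ℝ) → ℝ) (L : ((Fin k → ℝ) → ℝ) →ₗ[ℝ] ℝ) (δ : ℝ)
    (F G : Set ((Fin k → ℝ) → ℝ)) : ℝ :=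
  sSup {d : ℝ | ∃ f ∈ F, ∃ g ∈ G,
    (∑ i, ((g (x i) - f (x i)) / σ (x i)) ^ 2) ≤ δ ^ 2 ∧ d = L g - L f}

section Aux

open ProbabilityTheory

lemma gauss_cdf_zero : cdf (gaussianReal 0 1) 0 = 1/2 := by
  set μ := gaussianReal 0 1 with hμ
  have hsym : μ.map (fun x => (-1 : ℝ) * x) = μ := by
    rw [hμ, gaussianReal_map_const_mul]
    norm_num
  have h0 : μ {0} = 0 :=
    (gaussianReal_absolutelyContinuous 0 (v := 1) one_ne_zero) (by simp)
  have hIci : μ (Set.Ici 0) = μ (Set.Iic 0) := by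
    conv_rhs => rw [← hsym]
    rw [Measure.map_apply (by fun_prop) measurableSet_Iic]
    congr 1
    ext y
    simp [neg_le]
  have hIoi : μ (Set.Ioi 0) = μ (Set.Ici 0) := by
    refine le_antisymm (measure_mono Set.Ioi_subset_Ici_self) ?_
    have hsub : Set.Ici (0:ℝ) ⊆ Set.Ioi 0 ∪ {0} := by
      intro y hy
      rcases lt_or_eq_of_le (Set.mem_Ici.mp hy : (0:ℝ) ≤ y) with h | h
      · exact Or.inl h
      · exact Or.inr (by simp [h.symm])
    calc μ (Set.Ici 0) ≤ μ (Set.Ioi 0 ∪ {0}) := measure_mono hsub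
    _ ≤ μ (Set.Ioi 0) + μ {0} := measure_union_le _ _
    _ = μ (Set.Ioi 0) := by rw [h0, add_zero]
  have hcompl : μ (Set.Ioi 0) = 1 - μ (Set.Iic 0) := by
    rw [← Set.compl_Iic]
    rw [measure_compl measurableSet_Iic (measure_ne_top μ _), measure_univ]
  have h2 : μ (Set.Iic 0) + μ (Set.Iic 0) = 1 := by
    have := hIoi.trans hIci
    rw [hcompl] at this
    have hle : μ (Set.Iic 0) ≤ 1 := prob_le_one
    nth_rewrite 1 [← this]
    rw [tsub_add_cancel_of_le hle]
  have : μ (Set.Iic 0) = 1/2 := by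
    have := h2
    rw [← two_mul] at this
    rw [ENNReal.eq_div_iff (by norm_num) (by norm_num)]
    rw [mul_comm] at this ⊢
    exact this
  rw [cdf_eq_real, measureReal_def, this]
  simp [ENNReal.toReal_div]

/-- `gaussQuantile q` written via the cdf. -/
lemma gaussQuantile_eq (q : ℝ) :
    gaussQuantile q = sInf {t : ℝ | q ≤ cdf (gaussianReal 0 1) t} := by
  unfold gaussQuantile
  congr 1
  ext t
  simp only [Set.mem_setOf_eq, cdf_eq_real, measureReal_def]

lemma gaussSet_nonempty {q : ℝ} (hq : q < 1) :
    {t : ℝ | q ≤ cdf (gaussianReal 0 1) t}.Nonempty := by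
  have h := tendsto_cdf_atTop (gaussianReal 0 1)
  have := (h.eventually (eventually_ge_nhds hq)).exists
  obtain ⟨t, ht⟩ := this
  exact ⟨t, ht⟩

lemma gaussSet_subset {q : ℝ} (hq : 1/2 < q) :
    {t : ℝ | q ≤ cdf (gaussianReal 0 1) t} ⊆ Set.Ioi 0 := by
  intro t ht
  by_contra h
  simp only [Set.mem_Ioi, not_lt] at h
  have : cdf (gaussianReal 0 1) t ≤ cdf (gaussianReal 0 1) 0 :=
    monotone_cdf _ (by simpa using h)
  rw [gauss_cdf_zero] at this
  exact absurd (le_trans (Set.mem_setOf.mp ht) this) (not_le.mpr hq)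

lemma gaussSet_bddBelow {q : ℝ} (hq : 1/2 < q) :
    BddBelow {t : ℝ | q ≤ cdf (gaussianReal 0 1) t} :=
  ⟨0, fun t ht => le_of_lt (gaussSet_subset hq ht)⟩

/-- The quantile attains its defining inequality (right-continuity of the cdf). -/
lemma gaussQuantile_mem {q : ℝ} (hq : 1/2 < q) (hq1 : q < 1) :
    q ≤ cdf (gaussianReal 0 1) (gaussQuantile q) := by
  set S := {t : ℝ | q ≤ cdf (gaussianReal 0 1) t} with hS
  have hne := gaussSet_nonempty hq1
  have hbdd := gaussSet_bddBelow hq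
  rw [gaussQuantile_eq]
  set z := sInf S with hz
  have hrc : ContinuousWithinAt (cdf (gaussianReal 0 1)) (Set.Ici z) z :=
    (cdf (gaussianReal 0 1)).right_continuous z
  have hten : Tendsto (cdf (gaussianReal 0 1)) (nhdsWithin z (Set.Ioi z))
      (nhds (cdf (gaussianReal 0 1) z)) :=
    hrc.tendsto.mono_left (nhdsWithin_mono z Set.Ioi_subset_Ici_self)
  refine ge_of_tendsto hten ?_
  filter_upwards [self_mem_nhdsWithin] with t ht
  obtain ⟨s, hsS, hst⟩ := Real.lt_sInf_add_pos hne (sub_pos.mpr ht)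
  have : s ≤ t := by linarith [hst]
  exact le_trans hsS (monotone_cdf _ this)

lemma gaussQuantile_pos {q : ℝ} (hq : 1/2 < q) (hq1 : q < 1) :
    0 < gaussQuantile q := by
  have hmem : q ≤ cdf (gaussianReal 0 1) (gaussQuantile q) := gaussQuantile_mem hq hq1
  exact gaussSet_subset hq (Set.mem_setOf.mpr hmem)

lemma gaussQuantile_mono {q q' : ℝ} (hq : 1/2 < q) (hq1 : q' < 1) (h : q ≤ q') :
    gaussQuantile q ≤ gaussQuantile q' := by
  rw [gaussQuantile_eq, gaussQuantile_eq]
  refine csInf_le_csInf (gaussSet_bddBelow hq) (gaussSet_nonempty hq1) ?_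
  intro t ht
  exact le_trans h ht

end Aux

/-- Scaling bound for the ordered modulus: for `0 < δ₁ ≤ δ₂`,
`ω(δ₂) ≤ (δ₂/δ₁) ω(δ₁)`, given convexity of the larger class and `G ⊆ F`. -/
lemma ordModL_scale {k : ℕ} (n : ℕ) (x : Fin n → (Fin k → ℝ))
    (σ : (Fin k → ℝ) → ℝ) (L : ((Fin k → ℝ) → ℝ) →ₗ[ℝ] ℝ)
    {F G : Set ((Fin k → ℝ) → ℝ)} (hG : G.Nonempty) (hF : Convex ℝ F) (hGF : G ⊆ F)
    {δ₁ δ₂ : ℝ} (h1 : 0 < δ₁) (h12 : δ₁ ≤ δ₂) :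
    ordModL n x σ L δ₂ F G ≤ δ₂ / δ₁ * ordModL n x σ L δ₁ F G := by
  set S : ℝ → Set ℝ := fun δ => {d : ℝ | ∃ f ∈ F, ∃ g ∈ G,
    (∑ i, ((g (x i) - f (x i)) / σ (x i)) ^ 2) ≤ δ ^ 2 ∧ d = L g - L f} with hSdef
  have h2 : (0:ℝ) < δ₂ := lt_of_lt_of_le h1 h12
  set lam : ℝ := δ₁ / δ₂ with hlam
  have hlam0 : 0 < lam := div_pos h1 h2
  have hlam1 : lam ≤ 1 := (div_le_one h2).mpr h12
  -- 0 belongs to every S δ with δ ≥ 0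
  have hzero : ∀ δ : ℝ, (0:ℝ) ∈ S δ := by
    intro δ
    obtain ⟨g, hg⟩ := hG
    refine ⟨g, hGF hg, g, hg, ?_, by ring⟩
    simp [sq_nonneg]
  -- scaling map
  have hscale : ∀ d ∈ S δ₂, lam * d ∈ S δ₁ := by
    rintro d ⟨f, hf, g, hg, hsum, rfl⟩
    refine ⟨lam • f + (1 - lam) • g, hF hf (hGF hg) hlam0.le (by linarith) (by ring),
      g, hg, ?_, ?_⟩
    · have key : ∀ i, ((g (x i) - (lam • f + (1 - lam) • g) (x i)) / σ (x i)) ^ 2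
          = lam ^ 2 * ((g (x i) - f (x i)) / σ (x i)) ^ 2 := by
        intro i
        have : g (x i) - (lam • f + (1 - lam) • g) (x i) = lam * (g (x i) - f (x i)) := by
          simp [Pi.add_apply, Pi.smul_apply, smul_eq_mul]
          ring
        rw [this]
        field_simp
      calc (∑ i, ((g (x i) - (lam • f + (1 - lam) • g) (x i)) / σ (x i)) ^ 2)
          = lam ^ 2 * ∑ i, ((g (x i) - f (x i)) / σ (x i)) ^ 2 := by
            rw [Finset.mul_sum]; exact Finset.sum_congr rfl fun i _ => key i
        _ ≤ lam ^ 2 * δ₂ ^ 2 := by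
            exact mul_le_mul_of_nonneg_left hsum (sq_nonneg _)
        _ = δ₁ ^ 2 := by
            rw [hlam]; field_simp
    · have : L (lam • f + (1 - lam) • g) = lam * L f + (1 - lam) * L g := by
        simp only [map_add, LinearMap.map_smul, smul_eq_mul]
      rw [this]
      ring
  by_cases hbdd : BddAbove (S δ₁)
  · have hSup1_nonneg : 0 ≤ sSup (S δ₁) := le_csSup hbdd (hzero δ₁)
    have hrhs_nonneg : 0 ≤ δ₂ / δ₁ * sSup (S δ₁) :=
      mul_nonneg (div_nonneg h2.le h1.le) hSup1_nonneg
    refine Real.sSup_le ?_ hrhs_nonneg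
    intro d hd
    have h1d : lam * d ≤ sSup (S δ₁) := le_csSup hbdd (hscale d hd)
    have : d = (δ₂ / δ₁) * (lam * d) := by
      rw [hlam]; field_simp
    rw [this]
    exact mul_le_mul_of_nonneg_left h1d (div_nonneg h2.le h1.le)
  · -- both suprema are the junk value 0
    have hbdd2 : ¬ BddAbove (S δ₂) := by
      intro hb
      refine hbdd ?_
      obtain ⟨M, hM⟩ := hb
      refine ⟨max M 0, ?_⟩
      intro d hd
      have hsub : S δ₁ ⊆ S δ₂ := by
        rintro e ⟨f, hf, g, hg, hsum, rfl⟩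
        exact ⟨f, hf, g, hg, le_trans hsum (by nlinarith), rfl⟩
      exact le_trans (hM (hsub hd)) (le_max_left _ _)
    show sSup (S δ₂) ≤ δ₂ / δ₁ * sSup (S δ₁)
    rw [Real.sSup_of_not_bddAbove hbdd2, Real.sSup_of_not_bddAbove hbdd]
    simp

/-- Integrability of a finite pointwise supremum. -/
lemma integrable_sup' {Ω : Type*} [MeasurableSpace Ω] {μ : Measure Ω}
    {ι : Type*} (s : Finset ι) (hs : s.Nonempty) (g : ι → Ω → ℝ)
    (h : ∀ i ∈ s, Integrable (g i) μ) :
    Integrable (fun ω => s.sup' hs fun i => g i ω) μ := by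
  revert h
  induction hs using Finset.Nonempty.cons_induction with
  | singleton i =>
      intro h
      simpa using h i (by simp)
  | cons i s hi hsne ih =>
      intro h
      have heq : (fun ω => (Finset.cons i s hi).sup' (Finset.cons_nonempty hi) fun j => g j ω)
          = fun ω => g i ω ⊔ s.sup' hsne fun j => g j ω := by
        funext ω
        rw [Finset.sup'_cons]
      rw [heq]
      exact (h i (Finset.mem_cons_self i s)).sup
        (ih fun j hj => h j (Finset.mem_cons_of_mem hj))

theorem stmt_8 {k : ℕ} (Ω : Type*) [MeasurableSpace Ω]
    (J : ℕ) (hJ : 0 < J) (α : ℝ) (hα0 : 0 < α) (hα1 : α < 1 / 2)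
    (F : Fin J → Set ((Fin k → ℝ) → ℝ)) (jJ : Fin J)
    (hne : ∀ j, (F j).Nonempty) (hconv : ∀ j, Convex ℝ (F j))
    (hsub : ∀ j, F j ⊆ F jJ)
    (L : ((Fin k → ℝ) → ℝ) →ₗ[ℝ] ℝ)
    (n : ℕ) (x : Fin n → (Fin k → ℝ)) (σ : (Fin k → ℝ) → ℝ) (hσ : ∀ y, 0 < σ y)
    (P : ((Fin k → ℝ) → ℝ) → Measure Ω)
    (hP : ∀ f ∈ F jJ, IsProbabilityMeasure (P f))
    (cl : Fin J → Ω → ℝ)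
    (hint : ∀ j, ∀ f ∈ F jJ, Integrable (cl j) (P f))
    (hlo : ∀ j, ∀ f ∈ F j,
      ∫ ω, (L f - cl j ω) ∂(P f)
        ≤ ordModL n x σ L (gaussQuantile (1 - α / J)) (F jJ) (F j)) :
    ∀ j, ∀ f ∈ F j,
      ∫ ω, (L f - Finset.univ.sup' ⟨jJ, Finset.mem_univ jJ⟩ fun ℓ => cl ℓ ω) ∂(P f)
        ≤ gaussQuantile (1 - α / J) / gaussQuantile (1 - α) *
            ordModL n x σ L (gaussQuantile (1 - α)) (F jJ) (F j) := by
  intro j f hf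
  have hfJ : f ∈ F jJ := hsub j hf
  haveI := hP f hfJ
  -- quantile facts
  have hJ1 : (1:ℝ) ≤ J := by exact_mod_cast hJ
  have hαJ0 : 0 < α / J := div_pos hα0 (by positivity)
  have hαJα : α / J ≤ α := by
    rw [div_le_iff₀ (by positivity)]
    nlinarith
  have hq1 : 1/2 < 1 - α := by linarith
  have hq1' : 1 - α < 1 := by linarith
  have hq2 : 1/2 < 1 - α / J := by linarith
  have hq2' : 1 - α / J < 1 := by linarith
  have hz1 : 0 < gaussQuantile (1 - α) := gaussQuantile_pos hq1 hq1'
  have hz12 : gaussQuantile (1 - α) ≤ gaussQuantile (1 - α / J) :=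
    gaussQuantile_mono hq1 hq2' (by linarith)
  -- integrability of the sup
  have hintM : Integrable
      (fun ω => Finset.univ.sup' ⟨jJ, Finset.mem_univ jJ⟩ fun ℓ => cl ℓ ω) (P f) :=
    integrable_sup' _ _ _ (fun i _ => hint i f hfJ)
  -- step 1: integral monotonicity
  have step1 : ∫ ω, (L f - Finset.univ.sup' ⟨jJ, Finset.mem_univ jJ⟩ fun ℓ => cl ℓ ω) ∂(P f)
      ≤ ∫ ω, (L f - cl j ω) ∂(P f) := by
    refine integral_mono ((integrable_const (L f)).sub hintM)
      ((integrable_const (L f)).sub (hint j f hfJ)) ?_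
    intro ω
    simp only [Pi.sub_apply]
    have : cl j ω ≤ Finset.univ.sup' ⟨jJ, Finset.mem_univ jJ⟩ fun ℓ => cl ℓ ω :=
      Finset.le_sup' (fun ℓ => cl ℓ ω) (Finset.mem_univ j)
    linarith
  -- step 2: scaling bound
  have step2 : ordModL n x σ L (gaussQuantile (1 - α / J)) (F jJ) (F j)
      ≤ gaussQuantile (1 - α / J) / gaussQuantile (1 - α) *
          ordModL n x σ L (gaussQuantile (1 - α)) (F jJ) (F j) :=
    ordModL_scale n x σ L (hne j) (hconv jJ) (hsub j) hz1 hz12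
  exact le_trans step1 (le_trans (hlo j f hf) step2)
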